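/- Let n = p₁⋯p_K with primes p₁ < ⋯ < p_K, fix s, let q be a prime with q > p_s and q ∉ {p_{s+1},…,p_K}, and set m = n/p_s. If Ψ(n) ≥ φ(n) + Δ for some Δ ≥ 0, then Ψ(qm) ≥ φ(qm) + Δ, where φ is Euler's totient function. -/

import Mathlib

open Complex Polynomial Finset

noncomputable def zeta' (N : ℕ) : ℂ := Complex.exp (2 * Real.pi * Complex.I / N)

lemma zeta'_prim {N : ℕ} (hN : N ≠ 0) : IsPrimitiveRoot (zeta' N) N :=
  Complex.isPrimitiveRoot_exp N hN

lemma zeta'_ne_zero (N : ℕ) : zeta' N ≠ 0 := Complex.exp_ne_zero _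

lemma zeta'_pow_eq {N : ℕ} (hN : N ≠ 0) : (zeta' N) ^ N = 1 := (zeta'_prim hN).pow_eq_one

lemma zeta'_mul_pow_left {a b : ℕ} (ha : a ≠ 0) (hb : b ≠ 0) : (zeta' (a*b)) ^ b = zeta' a := by
  unfold zeta'
  rw [← Complex.exp_nat_mul]
  congr 1
  have ha' : (a:ℂ) ≠ 0 := Nat.cast_ne_zero.2 ha
  have hb' : (b:ℂ) ≠ 0 := Nat.cast_ne_zero.2 hb
  push_cast
  field_simp

lemma zpow_reduce {z : ℂ} {N : ℕ} (hN : N ≠ 0) (hz : z ^ N = 1) (t : ℤ) :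
    ∃ r : ℕ, r < N ∧ z ^ t = z ^ r := by
  have hz0 : z ≠ 0 := by
    intro h
    rw [h, zero_pow hN] at hz
    exact zero_ne_one hz
  have hN' : (N:ℤ) ≠ 0 := by exact_mod_cast hN
  have h2 := Int.emod_nonneg t hN'
  have h3 : t % N < N := Int.emod_lt_of_pos t (by omega)
  refine ⟨(t % N).toNat, by omega, ?_⟩
  conv_lhs => rw [← Int.mul_ediv_add_emod t N]
  rw [zpow_add₀ hz0, zpow_mul, zpow_natCast, hz, one_zpow, one_mul,
    ← zpow_natCast]
  congr 1
  omega

lemma bezout' {a b : ℕ} (h : Nat.Coprime a b) : ∃ u v : ℤ, u * a + v * b = 1 := by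
  have h2 : IsCoprime (a : ℤ) (b : ℤ) := by
    rw [Int.isCoprime_iff_gcd_eq_one, Int.gcd_natCast_natCast]
    exact h
  obtain ⟨u, v, huv⟩ := h2
  exact ⟨u, v, huv⟩

lemma eq_one_of_pow_eq_one' {x : ℂ} {a b : ℕ} (hco : Nat.Coprime a b)
    (hxa : x ^ a = 1) (hxb : x ^ b = 1) : x = 1 := by
  rcases Nat.eq_zero_or_pos a with rfl | ha
  · rw [Nat.coprime_zero_left] at hco
    rw [hco, pow_one] at hxb
    exact hxb
  have hx0 : x ≠ 0 := by
    intro h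
    rw [h, zero_pow ha.ne'] at hxa
    exact zero_ne_one hxa
  obtain ⟨u, v, huv⟩ := bezout' hco
  calc x = x ^ (1:ℤ) := (zpow_one x).symm
    _ = x ^ (u*a+v*b) := by rw [huv]
    _ = (x^(a:ℕ))^u * (x^(b:ℕ))^v := by
        rw [zpow_add₀ hx0, mul_comm u, mul_comm v, zpow_mul, zpow_mul, zpow_natCast, zpow_natCast]
    _ = 1 := by rw [hxa, hxb, one_zpow, one_zpow, one_mul]

lemma root_decomp {p m : ℕ} (hp : p ≠ 0) (hm : m ≠ 0) (hco : Nat.Coprime p m)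
    {z : ℂ} (hz : z ^ (p * m) = 1) :
    ∃ ab : ℕ × ℕ, ab.1 < p ∧ ab.2 < m ∧ z = zeta' p ^ ab.1 * zeta' m ^ ab.2 := by
  have hpm : p * m ≠ 0 := mul_ne_zero hp hm
  haveI : NeZero (p*m) := ⟨hpm⟩
  obtain ⟨k, hk, hzk⟩ := (zeta'_prim hpm).eq_pow_of_pow_eq_one hz
  obtain ⟨u, v, huv⟩ := bezout' hco
  have h1 : zeta' (p*m) ^ m = zeta' p := zeta'_mul_pow_left hp hm
  have h2 : zeta' (p*m) ^ p = zeta' m := by rw [mul_comm p m]; exact zeta'_mul_pow_left hm hp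
  have hz0 : zeta' (p*m) ≠ 0 := zeta'_ne_zero _
  have hrep : z = zeta' m ^ (k*u : ℤ) * zeta' p ^ (k*v : ℤ) := by
    calc z = zeta' (p*m) ^ (k:ℤ) := by rw [← hzk, zpow_natCast]
      _ = zeta' (p*m) ^ ((p:ℤ)*(k*u) + (m:ℤ)*(k*v)) := by
          congr 1
          linear_combination (k:ℤ) * huv.symm
      _ = (zeta' (p*m) ^ (p:ℤ)) ^ (k*u : ℤ) * (zeta' (p*m)^(m:ℤ))^(k*v : ℤ) := by
          rw [zpow_add₀ hz0, zpow_mul _ (p:ℤ) ((k:ℤ)*u), zpow_mul _ (m:ℤ) ((k:ℤ)*v)]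
      _ = zeta' m ^ (k*u : ℤ) * zeta' p ^ (k*v : ℤ) := by
          rw [zpow_natCast, zpow_natCast, h1, h2]
  obtain ⟨a, ha, hae⟩ := zpow_reduce hp (zeta'_pow_eq hp) ((k:ℤ)*v)
  obtain ⟨b, hb, hbe⟩ := zpow_reduce hm (zeta'_pow_eq hm) ((k:ℤ)*u)
  exact ⟨(a, b), ha, hb, by rw [hrep, hae, hbe]; ring⟩

lemma root_unique {p m : ℕ} (hp : p ≠ 0) (hm : m ≠ 0) (hco : Nat.Coprime p m)
    {a a' b b' : ℕ} (ha : a < p) (ha' : a' < p) (hb : b < m) (hb' : b' < m)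
    (h : zeta' p ^ a * zeta' m ^ b = zeta' p ^ a' * zeta' m ^ b') : a = a' ∧ b = b' := by
  have hzp := zeta'_prim hp
  have hzm := zeta'_prim hm
  have hp0 : zeta' p ≠ 0 := zeta'_ne_zero _
  have hm0 : zeta' m ≠ 0 := zeta'_ne_zero _
  set x := zeta' p ^ a * (zeta' p ^ a')⁻¹ with hx
  have hx2 : x = zeta' m ^ b' * (zeta' m ^ b)⁻¹ := by
    rw [hx]
    field_simp
    linear_combination h
  have hxp : x ^ p = 1 := by
    rw [hx, mul_pow, inv_pow, ← pow_mul, ← pow_mul, mul_comm a p, mul_comm a' p,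
      pow_mul, pow_mul, hzp.pow_eq_one, one_pow, one_pow, inv_one, mul_one]
  have hxm : x ^ m = 1 := by
    rw [hx2, mul_pow, inv_pow, ← pow_mul, ← pow_mul, mul_comm b' m, mul_comm b m,
      pow_mul, pow_mul, hzm.pow_eq_one, one_pow, one_pow, inv_one, mul_one]
  have hx1 : x = 1 := eq_one_of_pow_eq_one' hco hxp hxm
  have hpp : zeta' p ^ a = zeta' p ^ a' := by
    have := hx1
    rw [hx] at this
    field_simp at this
    exact this
  have haa : a = a' := hzp.pow_inj ha ha' hpp
  have hbb : b = b' := by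
    apply hzm.pow_inj hb hb'
    apply mul_left_cancel₀ (pow_ne_zero a hp0)
    rw [h, haa]
  exact ⟨haa, hbb⟩
lemma pow_linearIndependent_rat {m : ℕ} (hm : m ≠ 0) :
    LinearIndependent ℚ (fun i : Fin m.totient => zeta' m ^ (i : ℕ)) := by
  have h := linearIndependent_pow (K := ℚ) (S := ℂ) (zeta' m)
  rwa [← cyclotomic_eq_minpoly_rat (zeta'_prim hm) (Nat.pos_of_ne_zero hm),
    natDegree_cyclotomic] at h

lemma lemB {m : ℕ} (hm : m ≠ 0) (c : ℕ → ℤ)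
    (h : ∑ b ∈ Finset.range m.totient, (c b : ℂ) * zeta' m ^ b = 0) :
    ∀ b < m.totient, c b = 0 := by
  have hli := pow_linearIndependent_rat hm
  rw [Fintype.linearIndependent_iff] at hli
  have key := hli (fun i => (c i : ℚ)) ?_
  · intro b hb
    have := key ⟨b, hb⟩
    exact_mod_cast this
  · rw [← h, ← Fin.sum_univ_eq_sum_range (fun b => (c b : ℂ) * zeta' m ^ b) m.totient]
    apply Finset.sum_congr rfl
    intro i _
    rw [Algebra.smul_def]
    norm_num

set_option maxHeartbeats 1000000 in
lemma minpoly_deg {m q : ℕ} (hm : m ≠ 0) (hq : q.Prime) (hqm : ¬ q ∣ m) :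
    (minpoly (IntermediateField.adjoin ℚ {zeta' m} : IntermediateField ℚ ℂ)
      (zeta' q)).natDegree = q - 1 := by
  set K : IntermediateField ℚ ℂ := IntermediateField.adjoin ℚ {zeta' m} with hK
  have hq0 : q ≠ 0 := hq.ne_zero
  have hintm : IsIntegral ℚ (zeta' m) := ((zeta'_prim hm).isIntegral (Nat.pos_of_ne_zero hm)).tower_top
  have hintq : IsIntegral ℚ (zeta' q) := ((zeta'_prim hq0).isIntegral hq.pos).tower_top
  have hintqK : IsIntegral (↥K) (zeta' q) := hintq.tower_top
  -- upper bound
  have haev : Polynomial.aeval (zeta' q) (cyclotomic q ℚ) = 0 := by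
    rw [Polynomial.aeval_def, ← Polynomial.eval_map, map_cyclotomic]
    exact (zeta'_prim hq0).isRoot_cyclotomic hq.pos
  have hdvd : minpoly (↥K) (zeta' q) ∣ (cyclotomic q ℚ).map (algebraMap ℚ ↥K) := by
    apply minpoly.dvd
    rw [Polynomial.aeval_map_algebraMap]
    exact haev
  have hub : (minpoly (↥K) (zeta' q)).natDegree ≤ q - 1 := by
    have hne : (cyclotomic q ℚ).map (algebraMap ℚ (↥K)) ≠ 0 :=
      (Polynomial.map_ne_zero_iff (algebraMap ℚ (↥K)).injective).2 (cyclotomic_ne_zero q ℚ)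
    have h2 := Polynomial.natDegree_le_of_dvd hdvd hne
    rwa [Polynomial.natDegree_map, natDegree_cyclotomic, Nat.totient_prime hq] at h2
  -- lower bound
  haveI hfd1 : FiniteDimensional ℚ (↥K) := IntermediateField.adjoin.finiteDimensional hintm
  set L : IntermediateField (↥K) ℂ := IntermediateField.adjoin (↥K) {zeta' q} with hL
  haveI hfd2 : FiniteDimensional (↥K) (↥L) := IntermediateField.adjoin.finiteDimensional hintqK
  haveI hfd3 : FiniteDimensional ℚ (↥L) := FiniteDimensional.trans ℚ (↥K) (↥L)
  have hmemq : zeta' q ∈ L := IntermediateField.mem_adjoin_simple_self (↥K) (zeta' q)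
  have hmemmK : zeta' m ∈ K := IntermediateField.mem_adjoin_simple_self ℚ (zeta' m)
  have hmemm : zeta' m ∈ L := by
    have := L.algebraMap_mem ⟨zeta' m, hmemmK⟩
    exact this
  have hinj : Function.Injective (algebraMap (↥L) ℂ) := (algebraMap (↥L) ℂ).injective
  have hx : IsPrimitiveRoot (⟨zeta' q, hmemq⟩ : ↥L) q := by
    apply IsPrimitiveRoot.of_map_of_injective (f := (algebraMap (↥L) ℂ)) _ hinj
    exact zeta'_prim hq0
  have hy : IsPrimitiveRoot (⟨zeta' m, hmemm⟩ : ↥L) m := by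
    apply IsPrimitiveRoot.of_map_of_injective (f := (algebraMap (↥L) ℂ)) _ hinj
    exact zeta'_prim hm
  have hco : Nat.Coprime q m := (Nat.Prime.coprime_iff_not_dvd hq).2 hqm
  have hlcm : Nat.lcm q m = q * m := Nat.Coprime.lcm_eq_mul hco
  have hirr : Irreducible (cyclotomic (Nat.lcm q m) ℚ) := by
    apply cyclotomic.irreducible_rat
    rw [hlcm]
    exact Nat.mul_pos hq.pos (Nat.pos_of_ne_zero hm)
  have key := IsPrimitiveRoot.lcm_totient_le_finrank (K := ℚ) hx hy hirr
  have htot : (Nat.lcm q m).totient = q.totient * m.totient := by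
    rw [hlcm, Nat.totient_mul hco]
  have htower : Module.finrank ℚ (↥K) * Module.finrank (↥K) (↥L) = Module.finrank ℚ (↥L) :=
    Module.finrank_mul_finrank ℚ (↥K) (↥L)
  have hfrK : Module.finrank ℚ (↥K) = m.totient := by
    rw [hK, IntermediateField.adjoin.finrank hintm,
      ← cyclotomic_eq_minpoly_rat (zeta'_prim hm) (Nat.pos_of_ne_zero hm), natDegree_cyclotomic]
  have hfrL : Module.finrank (↥K) (↥L) = (minpoly (↥K) (zeta' q)).natDegree :=
    IntermediateField.adjoin.finrank hintqK
  have hmt : 0 < m.totient := Nat.totient_pos.2 (Nat.pos_of_ne_zero hm)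
  have hchain : m.totient * q.totient ≤ m.totient * (minpoly (↥K) (zeta' q)).natDegree := by
    calc m.totient * q.totient = (Nat.lcm q m).totient := by rw [htot, mul_comm]
      _ ≤ Module.finrank ℚ (↥L) := key
      _ = Module.finrank ℚ (↥K) * Module.finrank (↥K) (↥L) := htower.symm
      _ = m.totient * (minpoly (↥K) (zeta' q)).natDegree := by rw [hfrK, hfrL]
  have hlow : q.totient ≤ (minpoly (↥K) (zeta' q)).natDegree :=
    Nat.le_of_mul_le_mul_left hchain hmt
  rw [Nat.totient_prime hq] at hlow
  omega
set_option maxHeartbeats 1000000 in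
lemma lemA {m q : ℕ} (hm : m ≠ 0) (hq : q.Prime) (hqm : ¬ q ∣ m)
    (c : ℕ → ℂ)
    (hc : ∀ a, c a ∈ (IntermediateField.adjoin ℚ {zeta' m} : IntermediateField ℚ ℂ))
    (hsum : ∑ a ∈ Finset.range q, c a * zeta' q ^ a = 0) :
    ∀ a < q, c a = c (q - 1) := by
  set K : IntermediateField ℚ ℂ := IntermediateField.adjoin ℚ {zeta' m} with hK
  have hdeg := minpoly_deg hm hq hqm
  have hli : LinearIndependent (↥K) (fun i : Fin (q-1) => zeta' q ^ (i:ℕ)) := by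
    have h := linearIndependent_pow (K := ↥K) (S := ℂ) (zeta' q)
    rwa [hdeg] at h
  have hq1 : 1 < q := hq.one_lt
  have hq0 : q ≠ 0 := hq.ne_zero
  have hgeom : ∑ a ∈ Finset.range q, zeta' q ^ a = 0 :=
    (zeta'_prim hq0).geom_sum_eq_zero hq1
  have hsplit : ∀ f : ℕ → ℂ,
      ∑ a ∈ Finset.range q, f a = (∑ a ∈ Finset.range (q-1), f a) + f (q-1) := by
    intro f
    have hqe : q - 1 + 1 = q := by omega
    conv_lhs => rw [← hqe, Finset.sum_range_succ]
  have hnew : ∑ a ∈ Finset.range (q-1), (c a - c (q-1)) * zeta' q ^ a = 0 := by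
    have h2 := hsum
    rw [hsplit] at h2
    have h3 := hgeom
    rw [hsplit] at h3
    have hexp : ∑ a ∈ Finset.range (q-1), (c a - c (q-1)) * zeta' q ^ a
        = (∑ a ∈ Finset.range (q-1), c a * zeta' q ^ a)
          - c (q-1) * ∑ a ∈ Finset.range (q-1), zeta' q ^ a := by
      rw [Finset.mul_sum, ← Finset.sum_sub_distrib]
      apply Finset.sum_congr rfl
      intros
      ring
    rw [hexp]
    have h4 : (∑ a ∈ Finset.range (q-1), zeta' q ^ a) = - zeta' q ^ (q-1) := by
      linear_combination h3
    rw [h4]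
    linear_combination h2
  rw [Fintype.linearIndependent_iff] at hli
  have hcoef := hli (fun i => (⟨c i - c (q-1), sub_mem (hc i) (hc (q-1))⟩ : ↥K)) ?_
  · intro a ha
    rcases lt_or_eq_of_le (Nat.le_sub_one_of_lt ha) with h | h
    · have := hcoef ⟨a, h⟩
      have h5 : c a - c (q-1) = 0 := by
        have := congrArg (Subtype.val) this
        simpa using this
      exact sub_eq_zero.mp h5
    · rw [h]
  · rw [← hnew, ← Fin.sum_univ_eq_sum_range (fun a => (c a - c (q-1)) * zeta' q ^ a) (q-1)]
    apply Finset.sum_congr rfl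
    intro i _
    rw [Algebra.smul_def]
    rfl
def QuasiIndep (S : Set ℂ) : Prop :=
  ∀ (s : Finset ℂ) (ε : ℂ → ℤ), ↑s ⊆ S →
    (∀ z ∈ s, ε z = 0 ∨ ε z = 1 ∨ ε z = -1) →
    (∑ z ∈ s, (ε z : ℂ) * z) = 0 → ∀ z ∈ s, ε z = 0

/-- `Psi N` is the maximal cardinality of a quasi-independent set of N-th roots of unity. -/
noncomputable def Psi (N : ℕ) : ℕ :=
  sSup {k | ∃ E : Finset ℂ, (∀ z ∈ E, z ^ N = 1) ∧ QuasiIndep ↑E ∧ E.card = k}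

lemma quasiIndep_empty : QuasiIndep (↑(∅ : Finset ℂ)) := by
  intro s ε hs _ _ z hz
  exact absurd (hs hz) (by simp)

lemma psi_bdd (N : ℕ) (hN : N ≠ 0) :
    ∀ k ∈ {k | ∃ E : Finset ℂ, (∀ z ∈ E, z ^ N = 1) ∧ QuasiIndep ↑E ∧ E.card = k}, k ≤ N := by
  rintro k ⟨E, hroot, -, rfl⟩
  have hsub : E ⊆ Polynomial.nthRootsFinset N (1 : ℂ) := fun z hz =>
    (Polynomial.mem_nthRootsFinset (Nat.pos_of_ne_zero hN) (1 : ℂ)).2 (hroot z hz)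
  classical
  calc E.card ≤ (Polynomial.nthRootsFinset N (1 : ℂ)).card := Finset.card_le_card hsub
    _ ≤ Multiset.card (Polynomial.nthRoots N (1 : ℂ)) := by
        rw [Polynomial.nthRootsFinset_def]
        exact Multiset.toFinset_card_le _
    _ ≤ N := Polynomial.card_nthRoots N 1

lemma psi_mem (N : ℕ) (hN : N ≠ 0) :
    ∃ E : Finset ℂ, (∀ z ∈ E, z ^ N = 1) ∧ QuasiIndep ↑E ∧ E.card = Psi N := by
  have hne : {k | ∃ E : Finset ℂ, (∀ z ∈ E, z ^ N = 1) ∧ QuasiIndep ↑E ∧ E.card = k}.Nonempty :=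
    ⟨0, ∅, by simp, quasiIndep_empty, by simp⟩
  have hbdd : BddAbove {k | ∃ E : Finset ℂ, (∀ z ∈ E, z ^ N = 1) ∧ QuasiIndep ↑E ∧ E.card = k} :=
    ⟨N, fun k hk => psi_bdd N hN k hk⟩
  exact Nat.sSup_mem hne hbdd

lemma psi_ge (N : ℕ) (hN : N ≠ 0) (E : Finset ℂ) (hroot : ∀ z ∈ E, z ^ N = 1)
    (hqi : QuasiIndep ↑E) : E.card ≤ Psi N :=
  le_csSup ⟨N, fun k hk => psi_bdd N hN k hk⟩ ⟨E, hroot, hqi, rfl⟩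
set_option maxHeartbeats 2000000 in
theorem stmt_16 (n p q m Δ : ℕ) (hn : 1 < n) (hsf : Squarefree n)
    (hp : p.Prime) (hpn : p ∣ n) (hm : m = n / p)
    (hq : q.Prime) (hpq : p < q) (hqm : ¬ q ∣ m)
    (hΨ : Nat.totient n + Δ ≤ Psi n) :
    Nat.totient (q * m) + Δ ≤ Psi (q * m) := by
  classical
  have hp0 : p ≠ 0 := hp.pos.ne'
  have hq0 : q ≠ 0 := hq.pos.ne'
  have hpd : p * m = n := by rw [hm]; exact Nat.mul_div_cancel' hpn
  have hm0 : m ≠ 0 := by rintro rfl; omega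
  have hpm' : ¬ p ∣ m := by
    intro hdvd
    have h2 : p * p ∣ n := by rw [← hpd]; exact mul_dvd_mul_left p hdvd
    have := hsf p h2
    rw [Nat.isUnit_iff] at this
    exact hp.one_lt.ne' this
  have hcopm : Nat.Coprime p m := (hp.coprime_iff_not_dvd).2 hpm'
  have hcoqm : Nat.Coprime q m := (hq.coprime_iff_not_dvd).2 hqm
  have hφm_le : m.totient ≤ m := Nat.totient_le m
  obtain ⟨E, hEroot, hEqi, hEcard⟩ := psi_mem n (by omega)
  -- decomposition of elements of E
  have hdec : ∀ z : ℂ, ∃ ab : ℕ × ℕ, z ∈ E →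
      (ab.1 < p ∧ ab.2 < m ∧ z = zeta' p ^ ab.1 * zeta' m ^ ab.2) := by
    intro z
    by_cases hz : z ∈ E
    · obtain ⟨ab, h1, h2, h3⟩ := root_decomp hp0 hm0 hcopm (z := z) (by rw [hpd]; exact hEroot z hz)
      exact ⟨ab, fun _ => ⟨h1, h2, h3⟩⟩
    · exact ⟨(0,0), fun h => absurd h hz⟩
  choose d hd using hdec
  set ι : ℂ → ℂ := fun z => zeta' q ^ (d z).1 * zeta' m ^ (d z).2 with hι
  set E' : Finset ℂ := E.image ι with hE'
  set F : Finset ℂ := ((Finset.Ico p q) ×ˢ (Finset.range m.totient)).image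
      (fun ab => zeta' q ^ ab.1 * zeta' m ^ ab.2) with hF
  set G : Finset ℂ := E' ∪ F with hG
  -- injectivity
  have hinj : ∀ z ∈ E, ∀ w ∈ E, ι z = ι w → z = w := by
    intro z hz w hw h
    obtain ⟨hz1, hz2, hz3⟩ := hd z hz
    obtain ⟨hw1, hw2, hw3⟩ := hd w hw
    rw [hι] at h
    simp only at h
    obtain ⟨h1, h2⟩ := root_unique hq0 hm0 hcoqm (lt_trans hz1 hpq) (lt_trans hw1 hpq) hz2 hw2 h
    rw [hz3, hw3, h1, h2]
  have hE'card : E'.card = E.card := Finset.card_image_of_injOn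
    (fun z hz w hw h => hinj z hz w hw h)
  have hFinj : ∀ ab ∈ (Finset.Ico p q) ×ˢ (Finset.range m.totient),
      ∀ ab' ∈ (Finset.Ico p q) ×ˢ (Finset.range m.totient),
      (fun ab : ℕ × ℕ => zeta' q ^ ab.1 * zeta' m ^ ab.2) ab
        = (fun ab : ℕ × ℕ => zeta' q ^ ab.1 * zeta' m ^ ab.2) ab' → ab = ab' := by
    rintro ⟨a,b⟩ hab ⟨a',b'⟩ hab' h
    simp only [Finset.mem_product, Finset.mem_Ico, Finset.mem_range] at hab hab'
    simp only at h
    obtain ⟨h1, h2⟩ := root_unique hq0 hm0 hcoqm hab.1.2 hab'.1.2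
      (lt_of_lt_of_le hab.2 hφm_le) (lt_of_lt_of_le hab'.2 hφm_le) h
    simp [Prod.ext_iff, h1, h2]
  have hFcard : F.card = (q - p) * m.totient := by
    rw [hF, Finset.card_image_of_injOn (fun x hx y hy h => hFinj x hx y hy h),
      Finset.card_product, Nat.card_Ico, Finset.card_range]
  have hdisj : Disjoint E' F := by
    rw [Finset.disjoint_left]
    intro z hzE' hzF
    obtain ⟨w, hw, hwz⟩ := Finset.mem_image.1 hzE'
    obtain ⟨ab, hab, habz⟩ := Finset.mem_image.1 hzF
    obtain ⟨hw1, hw2, -⟩ := hd w hw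
    simp only [Finset.mem_product, Finset.mem_Ico, Finset.mem_range] at hab
    have hee : zeta' q ^ ab.1 * zeta' m ^ ab.2 = zeta' q ^ (d w).1 * zeta' m ^ (d w).2 := by
      rw [habz, ← hwz, hι]
    obtain ⟨h1, -⟩ := root_unique hq0 hm0 hcoqm hab.1.2 (lt_trans hw1 hpq)
      (lt_of_lt_of_le hab.2 hφm_le) hw2 hee
    omega
  have hGcard : G.card = E.card + (q - p) * m.totient := by
    rw [hG, Finset.card_union_of_disjoint hdisj, hE'card, hFcard]
  have hpow1 : ∀ a b : ℕ, (zeta' q ^ a * zeta' m ^ b) ^ (q * m) = 1 := by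
    intro a b
    have e1 : (zeta' q ^ a) ^ (q*m) = 1 := by
      rw [← pow_mul, show a*(q*m) = q*(a*m) by ring, pow_mul, zeta'_pow_eq hq0, one_pow]
    have e2 : (zeta' m ^ b) ^ (q*m) = 1 := by
      rw [← pow_mul, show b*(q*m) = m*(b*q) by ring, pow_mul, zeta'_pow_eq hm0, one_pow]
    rw [mul_pow, e1, e2, one_mul]
  have hGroot : ∀ z ∈ G, z ^ (q * m) = 1 := by
    intro z hz
    rcases Finset.mem_union.1 hz with h | h
    · obtain ⟨w, hw, rfl⟩ := Finset.mem_image.1 h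
      exact hpow1 _ _
    · obtain ⟨ab, hab, rfl⟩ := Finset.mem_image.1 h
      exact hpow1 _ _
  -- quasi-independence of G
  have hGqi : QuasiIndep ↑G := by
    intro s ε hsub hε hsum0
    have hsG : s ⊆ G := fun z hz => Finset.mem_coe.1 (hsub hz)
    set c : ℂ → ℤ := fun z => if z ∈ s then ε z else 0 with hc
    have hsumG : ∑ z ∈ G, (c z : ℂ) * z = 0 := by
      rw [← Finset.sum_subset hsG (fun z hzG hzs => by simp [hc, hzs]), ← hsum0]
      apply Finset.sum_congr rfl
      intro z hz
      simp [hc, hz]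
    set S : ℕ → ℂ := fun a =>
      (∑ z ∈ E.filter (fun z => (d z).1 = a), (c (ι z) : ℂ) * zeta' m ^ (d z).2)
      + (∑ b ∈ Finset.range m.totient,
          (if p ≤ a then (c (zeta' q ^ a * zeta' m ^ b) : ℂ) else 0) * zeta' m ^ b) with hS
    have hmap : ∀ z ∈ E, (d z).1 ∈ Finset.range q :=
      fun z hz => Finset.mem_range.2 (lt_trans (hd z hz).1 hpq)
    have e1 : ∑ a ∈ Finset.range q,
        (∑ z ∈ E.filter (fun z => (d z).1 = a), (c (ι z) : ℂ) * zeta' m ^ (d z).2) * zeta' q ^ a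
        = ∑ z ∈ E', (c z : ℂ) * z := by
      calc ∑ a ∈ Finset.range q,
          (∑ z ∈ E.filter (fun z => (d z).1 = a), (c (ι z) : ℂ) * zeta' m ^ (d z).2) * zeta' q ^ a
          = ∑ a ∈ Finset.range q, ∑ z ∈ E.filter (fun z => (d z).1 = a),
              (c (ι z) : ℂ) * ι z := by
            apply Finset.sum_congr rfl
            intro a _
            rw [Finset.sum_mul]
            apply Finset.sum_congr rfl
            intro z hz
            have hz2 := (Finset.mem_filter.1 hz).2
            rw [hι]
            simp only
            rw [hz2]
            ring
        _ = ∑ z ∈ E, (c (ι z) : ℂ) * ι z :=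
            Finset.sum_fiberwise_of_maps_to hmap _
        _ = ∑ z ∈ E', (c z : ℂ) * z :=
            (Finset.sum_image (f := fun z => (c z : ℂ) * z) hinj).symm
    have e2 : ∑ a ∈ Finset.range q,
        (∑ b ∈ Finset.range m.totient,
          (if p ≤ a then (c (zeta' q ^ a * zeta' m ^ b) : ℂ) else 0) * zeta' m ^ b) * zeta' q ^ a
        = ∑ z ∈ F, (c z : ℂ) * z := by
      have hsub2 : Finset.Ico p q ⊆ Finset.range q := by
        intro x hx
        rw [Finset.mem_Ico] at hx
        exact Finset.mem_range.2 hx.2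
      have hvanish : ∀ a ∈ Finset.range q, a ∉ Finset.Ico p q →
          (∑ b ∈ Finset.range m.totient,
            (if p ≤ a then (c (zeta' q ^ a * zeta' m ^ b) : ℂ) else 0) * zeta' m ^ b)
            * zeta' q ^ a = 0 := by
        intro a ha ha'
        rw [Finset.mem_range] at ha
        rw [Finset.mem_Ico] at ha'
        have hnp : ¬ p ≤ a := fun h => ha' ⟨h, ha⟩
        rw [Finset.sum_eq_zero, zero_mul]
        intro b _
        rw [if_neg hnp, zero_mul]
      rw [← Finset.sum_subset hsub2 hvanish, hF, Finset.sum_image hFinj, Finset.sum_product]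
      apply Finset.sum_congr rfl
      intro a ha
      rw [Finset.mem_Ico] at ha
      rw [Finset.sum_mul]
      apply Finset.sum_congr rfl
      intro b _
      rw [if_pos ha.1]
      ring
    have hsum_split : ∑ a ∈ Finset.range q, S a * zeta' q ^ a = 0 := by
      calc ∑ a ∈ Finset.range q, S a * zeta' q ^ a
          = (∑ a ∈ Finset.range q,
              (∑ z ∈ E.filter (fun z => (d z).1 = a), (c (ι z) : ℂ) * zeta' m ^ (d z).2)
                * zeta' q ^ a)
            + ∑ a ∈ Finset.range q,
              (∑ b ∈ Finset.range m.totient,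
                (if p ≤ a then (c (zeta' q ^ a * zeta' m ^ b) : ℂ) else 0) * zeta' m ^ b)
                * zeta' q ^ a := by
            rw [← Finset.sum_add_distrib]
            apply Finset.sum_congr rfl
            intro a _
            rw [hS]
            ring
        _ = (∑ z ∈ E', (c z : ℂ) * z) + ∑ z ∈ F, (c z : ℂ) * z := by rw [e1, e2]
        _ = ∑ z ∈ G, (c z : ℂ) * z := by rw [hG, Finset.sum_union hdisj]
        _ = 0 := hsumG
    have hSK : ∀ a, S a ∈ (IntermediateField.adjoin ℚ {zeta' m} : IntermediateField ℚ ℂ) := by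
      intro a
      have hζ : zeta' m ∈ (IntermediateField.adjoin ℚ {zeta' m} : IntermediateField ℚ ℂ) :=
        IntermediateField.mem_adjoin_simple_self ℚ _
      rw [hS]
      apply add_mem
      · apply sum_mem
        intro z _
        exact mul_mem (intCast_mem _ _) (pow_mem hζ _)
      · apply sum_mem
        intro b _
        refine mul_mem ?_ (pow_mem hζ _)
        split
        · exact intCast_mem _ _
        · exact zero_mem _
    have hSeq := lemA hm0 hq hqm S hSK hsum_split
    have hgeomp : ∑ a ∈ Finset.range p, zeta' p ^ a = 0 :=
      (zeta'_prim hp0).geom_sum_eq_zero hp.one_lt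
    have hSa : ∀ a, a < p →
        (∑ z ∈ E.filter (fun z => (d z).1 = a), (c (ι z) : ℂ) * zeta' m ^ (d z).2) = S a := by
      intro a ha
      have h2 : ∑ b ∈ Finset.range m.totient,
          (if p ≤ a then (c (zeta' q ^ a * zeta' m ^ b) : ℂ) else 0) * zeta' m ^ b = 0 :=
        Finset.sum_eq_zero (fun b _ => by rw [if_neg (by omega), zero_mul])
      rw [hS]
      simp only
      rw [h2, add_zero]
    have hmapp : ∀ z ∈ E, (d z).1 ∈ Finset.range p :=
      fun z hz => Finset.mem_range.2 (hd z hz).1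
    have hclaim2 : ∑ z ∈ E, (c (ι z) : ℂ) * z = 0 := by
      have step0 : ∑ z ∈ E, (c (ι z) : ℂ) * z
          = ∑ z ∈ E, (c (ι z) : ℂ) * (zeta' p ^ (d z).1 * zeta' m ^ (d z).2) := by
        apply Finset.sum_congr rfl
        intro z hz
        rw [← (hd z hz).2.2]
      rw [step0]
      calc ∑ z ∈ E, (c (ι z) : ℂ) * (zeta' p ^ (d z).1 * zeta' m ^ (d z).2)
          = ∑ a ∈ Finset.range p, ∑ z ∈ E.filter (fun z => (d z).1 = a),
              (c (ι z) : ℂ) * (zeta' p ^ (d z).1 * zeta' m ^ (d z).2) :=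
            (Finset.sum_fiberwise_of_maps_to hmapp _).symm
        _ = ∑ a ∈ Finset.range p, S (q-1) * zeta' p ^ a := by
            apply Finset.sum_congr rfl
            intro a ha
            rw [Finset.mem_range] at ha
            rw [← hSeq a (lt_trans ha hpq), ← hSa a ha, Finset.sum_mul]
            apply Finset.sum_congr rfl
            intro z hz
            rw [(Finset.mem_filter.1 hz).2]
            ring
        _ = 0 := by rw [← Finset.mul_sum, hgeomp, mul_zero]
    have hcE : ∀ z ∈ E, c (ι z) = 0 := by
      apply hEqi E (fun z => c (ι z)) subset_rfl
      · intro z _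
        by_cases hmem : ι z ∈ s
        · simpa [hc, hmem] using hε (ι z) hmem
        · left
          simp [hc, hmem]
      · exact hclaim2
    have hS0 : S 0 = 0 := by
      have h1 : ∑ z ∈ E.filter (fun z => (d z).1 = 0), (c (ι z) : ℂ) * zeta' m ^ (d z).2 = 0 :=
        Finset.sum_eq_zero (fun z hz => by
          rw [hcE z (Finset.mem_filter.1 hz).1]
          norm_num)
      have h2 : ∑ b ∈ Finset.range m.totient,
          (if p ≤ 0 then (c (zeta' q ^ 0 * zeta' m ^ b) : ℂ) else 0) * zeta' m ^ b = 0 :=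
        Finset.sum_eq_zero (fun b _ => by
          rw [if_neg (by omega), zero_mul])
      rw [hS]
      simp only
      rw [h1, h2, add_zero]
    have hT : S (q-1) = 0 := (hSeq 0 hq.pos).symm.trans hS0
    have hcF : ∀ a, p ≤ a → a < q → ∀ b < m.totient,
        c (zeta' q ^ a * zeta' m ^ b) = 0 := by
      intro a hpa haq
      have hSa0 : S a = 0 := (hSeq a haq).trans hT
      rw [hS] at hSa0
      simp only at hSa0
      have hfil : E.filter (fun z => (d z).1 = a) = ∅ := by
        rw [Finset.filter_eq_empty_iff]
        intro z hz
        have := (hd z hz).1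
        omega
      rw [hfil, Finset.sum_empty, zero_add] at hSa0
      have hfin : ∑ b ∈ Finset.range m.totient,
          ((c (zeta' q ^ a * zeta' m ^ b) : ℂ)) * zeta' m ^ b = 0 := by
        rw [← hSa0]
        apply Finset.sum_congr rfl
        intro b _
        rw [if_pos hpa]
      exact lemB hm0 _ hfin
    intro z hz
    have hcz : c z = ε z := by simp [hc, hz]
    have hzG : z ∈ G := hsG hz
    have hc0 : c z = 0 := by
      rcases Finset.mem_union.1 hzG with h | h
      · obtain ⟨w, hw, rfl⟩ := Finset.mem_image.1 h
        exact hcE w hw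
      · obtain ⟨ab, hab, rfl⟩ := Finset.mem_image.1 h
        simp only [Finset.mem_product, Finset.mem_Ico, Finset.mem_range] at hab
        exact hcF ab.1 hab.1.1 hab.1.2 ab.2 hab.2
    omega
  -- final arithmetic
  have hqm0 : q * m ≠ 0 := by positivity
  have hle : G.card ≤ Psi (q*m) := psi_ge (q*m) hqm0 G hGroot hGqi
  have htotqm : (q*m).totient = (q-1) * m.totient := by
    rw [Nat.totient_mul hcoqm, Nat.totient_prime hq]
  have htotn : n.totient = (p-1) * m.totient := by
    rw [← hpd, Nat.totient_mul hcopm, Nat.totient_prime hp]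
  have hEc : (p-1) * m.totient + Δ ≤ E.card := by
    rw [hEcard]
    rw [htotn] at hΨ
    exact hΨ
  have hsplitmul : (q-1) * m.totient = (p-1) * m.totient + (q-p) * m.totient := by
    rw [← Nat.add_mul]
    congr 1
    have := hp.two_le
    omega
  calc (q*m).totient + Δ = (p-1) * m.totient + (q-p) * m.totient + Δ := by
        rw [htotqm, hsplitmul]
    _ ≤ E.card + (q-p) * m.totient := by omega
    _ = G.card := hGcard.symm
    _ ≤ Psi (q*m) := hle
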